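/- arXiv:1706.01766 — 3 statements merged into one kernel-verified Lean document; each statement's English description precedes it below -/
import Mathlib

section
/- Let D ≥ 1 and N ≥ 1 and let γ₁,…,γ_D be N×N complex matrices satisfying the Euclidean Clifford relations γᵢγⱼ + γⱼγᵢ = −2δᵢⱼ·I. Then for any vectors B, C ∈ ℝ^D, with 𝒜ᵢ := Σⱼ (BⱼCᵢ − CⱼBᵢ)γⱼ, one has Σᵢ 𝒜ᵢ·𝒜ᵢ = −2(‖B‖²‖C‖² − ⟨B,C⟩²)·I. -/
open scoped BigOperators

/-- For γ-matrices satisfying the Euclidean Clifford relations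
γᵢγⱼ + γⱼγᵢ = −2δᵢⱼ·1, and vectors B, C ∈ ℝ^D, with 𝒜ᵢ := Σⱼ (BⱼCᵢ − CⱼBᵢ)γⱼ,
one has Σᵢ 𝒜ᵢ·𝒜ᵢ = −2(‖B‖²‖C‖² − ⟨B,C⟩²)·1. -/
theorem sum_sq_magnetic_potential_eq
    (D N : ℕ) (hD : 1 ≤ D) (hN : 1 ≤ N)
    (γ : Fin D → Matrix (Fin N) (Fin N) ℂ)
    (hγ : ∀ i j, γ i * γ j + γ j * γ i =
      if i = j then (-2 : ℂ) • (1 : Matrix (Fin N) (Fin N) ℂ) else 0)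
    (B C : EuclideanSpace ℝ (Fin D))
    (𝒜 : Fin D → Matrix (Fin N) (Fin N) ℂ)
    (h𝒜 : ∀ i, 𝒜 i = ∑ j, ((B j * C i - C j * B i : ℝ) : ℂ) • γ j) :
    ∑ i, 𝒜 i * 𝒜 i =
      ((-2 * (‖B‖ ^ 2 * ‖C‖ ^ 2 - (inner ℝ B C : ℝ) ^ 2) : ℝ) : ℂ) •
        (1 : Matrix (Fin N) (Fin N) ℂ) := by
  set a : Fin D → Fin D → ℝ := fun i j => B j * C i - C j * B i with ha
  set c : Fin D → Fin D → ℝ := fun j k => ∑ i, a i j * a i k with hc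
  have hsym : ∀ j k, c j k = c k j := by
    intro j k; simp only [hc]; exact Finset.sum_congr rfl fun i _ => mul_comm _ _
  have key : ∑ i, 𝒜 i * 𝒜 i = ∑ j, ∑ k, ((c j k : ℝ) : ℂ) • (γ j * γ k) := by
    have h1 : ∀ i, 𝒜 i * 𝒜 i = ∑ j, ∑ k, ((a i j * a i k : ℝ) : ℂ) • (γ j * γ k) := by
      intro i
      rw [h𝒜, Finset.sum_mul_sum]
      refine Finset.sum_congr rfl fun j _ => Finset.sum_congr rfl fun k _ => ?_
      rw [smul_mul_assoc, mul_smul_comm, smul_smul, Complex.ofReal_mul]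
    simp_rw [h1]
    rw [Finset.sum_comm]
    refine Finset.sum_congr rfl fun j _ => ?_
    rw [Finset.sum_comm]
    refine Finset.sum_congr rfl fun k _ => ?_
    rw [hc]
    simp [Complex.ofReal_sum, Finset.sum_smul]
  have hSalt : ∑ i, 𝒜 i * 𝒜 i = ∑ j, ∑ k, ((c j k : ℝ) : ℂ) • (γ k * γ j) := by
    rw [key, Finset.sum_comm]
    refine Finset.sum_congr rfl fun j _ => Finset.sum_congr rfl fun k _ => ?_
    rw [hsym]
  have h2 : (2 : ℂ) • ∑ i, 𝒜 i * 𝒜 i =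
      (((-2 : ℝ) * ∑ j, c j j : ℝ) : ℂ) • (1 : Matrix (Fin N) (Fin N) ℂ) := by
    have hdbl : (2 : ℂ) • ∑ i, 𝒜 i * 𝒜 i =
        ∑ j, ∑ k, ((c j k : ℝ) : ℂ) • (γ j * γ k + γ k * γ j) := by
      rw [two_smul]
      nth_rewrite 1 [key]
      rw [hSalt, ← Finset.sum_add_distrib]
      refine Finset.sum_congr rfl fun j _ => ?_
      rw [← Finset.sum_add_distrib]
      exact Finset.sum_congr rfl fun k _ => (smul_add _ _ _).symm
    rw [hdbl]
    simp_rw [hγ]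
    rw [show (∑ j, ∑ k, ((c j k : ℝ) : ℂ) •
        (if j = k then (-2 : ℂ) • (1 : Matrix (Fin N) (Fin N) ℂ) else 0)) =
        ∑ j, ((c j j : ℝ) : ℂ) • ((-2 : ℂ) • (1 : Matrix (Fin N) (Fin N) ℂ)) from
      Finset.sum_congr rfl fun j _ => by
        rw [Finset.sum_eq_single j]
        · simp
        · intro k _ hk; simp [Ne.symm hk]
        · intro h; exact absurd (Finset.mem_univ j) h]
    rw [← Finset.sum_smul, Complex.ofReal_mul, Complex.ofReal_sum]
    rw [smul_smul, mul_comm]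
    norm_num
  have hdiag : ∑ j, c j j = 2 * (‖B‖ ^ 2 * ‖C‖ ^ 2 - (inner ℝ B C : ℝ) ^ 2) := by
    have hBn : ‖B‖ ^ 2 = ∑ j, B j ^ 2 := by
      rw [EuclideanSpace.norm_eq, Real.sq_sqrt (Finset.sum_nonneg fun i _ => sq_nonneg _)]
      simp [Real.norm_eq_abs, sq_abs]
    have hCn : ‖C‖ ^ 2 = ∑ j, C j ^ 2 := by
      rw [EuclideanSpace.norm_eq, Real.sq_sqrt (Finset.sum_nonneg fun i _ => sq_nonneg _)]
      simp [Real.norm_eq_abs, sq_abs]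
    have hBC : (inner ℝ B C : ℝ) = ∑ j, B j * C j := by
      simp [PiLp.inner_apply, RCLike.inner_apply, mul_comm]
    rw [hBn, hCn, hBC, hc]
    have e1 : (∑ j, B j ^ 2) * (∑ j, C j ^ 2) = ∑ j, ∑ i, B j ^ 2 * C i ^ 2 :=
      Finset.sum_mul_sum _ _ _ _
    have e2 : (∑ j, B j * C j) ^ 2 = ∑ j, ∑ i, (B j * C j) * (B i * C i) := by
      rw [sq]; exact Finset.sum_mul_sum _ _ _ _
    have hswap : ∑ j, ∑ i, C j ^ 2 * B i ^ 2 = ∑ j, ∑ i, B j ^ 2 * C i ^ 2 := by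
      rw [Finset.sum_comm]
      exact Finset.sum_congr rfl fun j _ => Finset.sum_congr rfl fun i _ => mul_comm _ _
    have estep : (∑ j, ∑ i, a i j * a i j) =
        (∑ j, ∑ i, B j ^ 2 * C i ^ 2) + (∑ j, ∑ i, C j ^ 2 * B i ^ 2)
          - 2 * ∑ j, ∑ i, (B j * C j) * (B i * C i) := by
      rw [Finset.mul_sum, ← Finset.sum_add_distrib, ← Finset.sum_sub_distrib]
      refine Finset.sum_congr rfl fun j _ => ?_
      rw [Finset.mul_sum, ← Finset.sum_add_distrib, ← Finset.sum_sub_distrib]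
      refine Finset.sum_congr rfl fun i _ => ?_
      simp only [ha]
      ring
    rw [e1, e2, estep, hswap]
    ring
  have h2' : (2 : ℂ) • ∑ i, 𝒜 i * 𝒜 i =
      (2 : ℂ) • ((-2 * (‖B‖ ^ 2 * ‖C‖ ^ 2 - (inner ℝ B C : ℝ) ^ 2) : ℝ) : ℂ) •
        (1 : Matrix (Fin N) (Fin N) ℂ) := by
    rw [h2, hdiag, smul_smul]
    congr 1
    push_cast
    ring
  exact smul_right_injective _ (two_ne_zero) h2'
end

section
/- Let D ≥ 1, N ≥ 1, let γ₁,…,γ_D be N×N complex matrices with γᵢγⱼ + γⱼγᵢ = −2δᵢⱼ·I, let ħ, κ, g > 0, and fix B, C ∈ ℝ^D; set 𝒜ᵢ := Σⱼ (BⱼCᵢ − CⱼBᵢ)γⱼ. Suppose U : ℝ^D → Mat_{N×N}(ℂ) is differentiable and satisfies the first-order system ∂U/∂Aᵢ = (i g/(2ħκ))·𝒜ᵢ·U for all i = 1,…,D and all A ∈ ℝ^D. Then U is twice differentiable and −(ħ²κ/2)·Σᵢ ∂²U/∂Aᵢ² + (g²/(4κ))·(‖B‖²‖C‖² − ⟨B,C⟩²)·U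 = 0. -/
open scoped BigOperators

attribute [local instance] Matrix.normedAddCommGroup Matrix.normedSpace

/-- Partial derivative in the direction of the i-th coordinate of A-space. -/
noncomputable def pd {D N : ℕ} (i : Fin D)
    (Φ : (Fin D → ℝ) → Matrix (Fin N) (Fin N) ℂ) :
    (Fin D → ℝ) → Matrix (Fin N) (Fin N) ℂ :=
  fun A => fderiv ℝ Φ A (Pi.single i 1)

lemma clifford_sum_sq {D N : ℕ} (γ : Fin D → Matrix (Fin N) (Fin N) ℂ)
    (hγ : ∀ i j, γ i * γ j + γ j * γ i =
      if i = j then (-2 : ℂ) • (1 : Matrix (Fin N) (Fin N) ℂ) else 0)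
    (a : Fin D → Fin D → ℂ) :
    ∑ i, (∑ j, a j i • γ j) * (∑ k, a k i • γ k)
      = (-(∑ i, ∑ j, a j i * a j i)) • (1 : Matrix (Fin N) (Fin N) ℂ) := by
  have hS : ∀ i, (∑ j, a j i • γ j) * (∑ k, a k i • γ k)
      = ∑ j, ∑ k, (a j i * a k i) • (γ j * γ k) := by
    intro i
    rw [Finset.sum_mul_sum]
    refine Finset.sum_congr rfl fun j _ => Finset.sum_congr rfl fun k _ => ?_
    rw [smul_mul_smul_comm]
  simp_rw [hS]
  set S := ∑ i, ∑ j, ∑ k, (a j i * a k i) • (γ j * γ k) with hSdef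
  have hswap : S = ∑ i, ∑ j, ∑ k, (a j i * a k i) • (γ k * γ j) := by
    refine Finset.sum_congr rfl fun i _ => ?_
    rw [Finset.sum_comm]
    refine Finset.sum_congr rfl fun j _ => Finset.sum_congr rfl fun k _ => ?_
    rw [mul_comm]
  have h2 : S + S = (2 : ℂ) • ((-(∑ i, ∑ j, a j i * a j i)) • (1 : Matrix (Fin N) (Fin N) ℂ)) := by
    nth_rewrite 2 [hswap]
    rw [hSdef]
    rw [← Finset.sum_add_distrib]
    have : ∀ i : Fin D, ((∑ j, ∑ k, (a j i * a k i) • (γ j * γ k)) +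
        ∑ j, ∑ k, (a j i * a k i) • (γ k * γ j))
        = (-2 : ℂ) • ((∑ j, a j i * a j i) • (1 : Matrix (Fin N) (Fin N) ℂ)) := by
      intro i
      rw [← Finset.sum_add_distrib]
      have : ∀ j : Fin D, ((∑ k, (a j i * a k i) • (γ j * γ k)) +
          ∑ k, (a j i * a k i) • (γ k * γ j))
          = (-2 : ℂ) • ((a j i * a j i) • (1 : Matrix (Fin N) (Fin N) ℂ)) := by
        intro j
        rw [← Finset.sum_add_distrib]
        have hterm : ∀ k : Fin D, (a j i * a k i) • (γ j * γ k) + (a j i * a k i) • (γ k * γ j)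
            = (a j i * a k i) • (if j = k then (-2 : ℂ) • (1 : Matrix (Fin N) (Fin N) ℂ) else 0) := by
          intro k; rw [← smul_add, hγ j k]
        simp_rw [hterm]
        simp only [smul_ite, smul_zero]
        rw [Finset.sum_ite_eq Finset.univ j fun k => (a j i * a k i) • ((-2 : ℂ) • (1 : Matrix (Fin N) (Fin N) ℂ))]
        simp [smul_smul, mul_comm]
      simp_rw [this]
      rw [← Finset.smul_sum, Finset.sum_smul]
    simp_rw [this, smul_smul]
    rw [← Finset.sum_smul]
    congr 1
    rw [← Finset.mul_sum]
    ring
  have := h2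
  rw [← two_smul ℂ S] at this
  exact smul_right_injective _ (two_ne_zero) this

/-- if U solves the first-order system
∂U/∂Aᵢ = (ig/(2ħκ))·𝒜ᵢ·U with 𝒜ᵢ := Σⱼ (BⱼCᵢ − CⱼBᵢ)γⱼ, then U is twice
differentiable and −(ħ²κ/2)·Σᵢ ∂²U/∂Aᵢ² + (g²/4κ)·(‖B‖²‖C‖² − ⟨B,C⟩²)·U = 0. -/
theorem phase_factor_second_order_equation
    (D N : ℕ) (hD : 1 ≤ D) (hN : 1 ≤ N)
    (γ : Fin D → Matrix (Fin N) (Fin N) ℂ)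
    (hγ : ∀ i j, γ i * γ j + γ j * γ i =
      if i = j then (-2 : ℂ) • (1 : Matrix (Fin N) (Fin N) ℂ) else 0)
    (hb κ g : ℝ) (hhb : 0 < hb) (hκ : 0 < κ) (hg : 0 < g)
    (B C : EuclideanSpace ℝ (Fin D))
    (𝒜 : Fin D → Matrix (Fin N) (Fin N) ℂ)
    (h𝒜 : ∀ i, 𝒜 i = ∑ j, ((B j * C i - C j * B i : ℝ) : ℂ) • γ j)
    (U : (Fin D → ℝ) → Matrix (Fin N) (Fin N) ℂ)
    (hU : Differentiable ℝ U)
    (hU1 : ∀ (A : Fin D → ℝ) (i : Fin D),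
      fderiv ℝ U A (Pi.single i 1) =
        (Complex.I * ((g / (2 * hb * κ) : ℝ) : ℂ)) • (𝒜 i * U A)) :
    (∀ i, Differentiable ℝ (pd i U)) ∧
    ∀ A : Fin D → ℝ,
      -(((hb ^ 2 * κ / 2 : ℝ) : ℂ) • ∑ i, pd i (pd i U) A)
        + ((g ^ 2 / (4 * κ) * (‖B‖ ^ 2 * ‖C‖ ^ 2 - (inner ℝ B C : ℝ) ^ 2) : ℝ) : ℂ) • U A
      = 0 := by
  set c : ℂ := Complex.I * ((g / (2 * hb * κ) : ℝ) : ℂ) with hc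
  -- continuous linear maps L i : M ↦ c • (𝒜 i * M)
  have hLex : ∀ i : Fin D, ∃ L : Matrix (Fin N) (Fin N) ℂ →L[ℝ] Matrix (Fin N) (Fin N) ℂ,
      ∀ M, L M = c • (𝒜 i * M) := by
    intro i
    refine ⟨LinearMap.toContinuousLinearMap ((c • LinearMap.mulLeft ℂ (𝒜 i)).restrictScalars ℝ), ?_⟩
    intro M; simp [LinearMap.mulLeft_apply]
  choose L hL using hLex
  have hpd1 : ∀ i, pd i U = fun A => L i (U A) := by
    intro i; funext A
    simp only [pd, hU1 A i, hL]
  have hdiff : ∀ i, Differentiable ℝ (pd i U) := by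
    intro i; rw [hpd1 i]
    exact (L i).differentiable.comp hU
  refine ⟨hdiff, fun A => ?_⟩
  -- second derivative
  have hpd2 : ∀ i, pd i (pd i U) A = (c * c) • ((𝒜 i * 𝒜 i) * U A) := by
    intro i
    have hfd : fderiv ℝ (fun A => L i (U A)) A = (L i).comp (fderiv ℝ U A) :=
      (((L i).hasFDerivAt).comp A (hU A).hasFDerivAt).fderiv
    simp only [pd, hpd1 i, hfd, ContinuousLinearMap.coe_comp', Function.comp_apply]
    rw [hU1 A i, hL, mul_smul_comm, smul_smul, ← mul_assoc (𝒜 i) (𝒜 i) (U A)]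
  have hsum : ∑ i, pd i (pd i U) A = (c * c) • ((∑ i, 𝒜 i * 𝒜 i) * U A) := by
    simp_rw [hpd2, Finset.sum_mul]
    rw [Finset.smul_sum]
  -- the Clifford algebra computation
  have halg : ∑ i, 𝒜 i * 𝒜 i
      = (-(((2 : ℝ) * (‖B‖ ^ 2 * ‖C‖ ^ 2 - (inner ℝ B C : ℝ) ^ 2) : ℝ) : ℂ))
        • (1 : Matrix (Fin N) (Fin N) ℂ) := by
    have := clifford_sum_sq γ hγ (fun j i => ((B j * C i - C j * B i : ℝ) : ℂ))
    simp_rw [h𝒜]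
    rw [this]
    congr 1
    have hsum2 : ∑ i : Fin D, ∑ j : Fin D,
        ((B j * C i - C j * B i : ℝ) : ℂ) * ((B j * C i - C j * B i : ℝ) : ℂ)
        = (((∑ i : Fin D, ∑ j : Fin D, (B j * C i - C j * B i) * (B j * C i - C j * B i)) : ℝ) : ℂ) := by
      push_cast; ring
    rw [hsum2]
    norm_cast
    have hBn : ‖B‖ ^ 2 = ∑ i, B i * B i := by
      rw [← real_inner_self_eq_norm_sq]; simp only [PiLp.inner_apply, RCLike.inner_apply, conj_trivial]
    have hCn : ‖C‖ ^ 2 = ∑ i, C i * C i := by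
      rw [← real_inner_self_eq_norm_sq]; simp only [PiLp.inner_apply, RCLike.inner_apply, conj_trivial]
    have hBC : (inner ℝ B C : ℝ) = ∑ i, B i * C i := by
      simp only [PiLp.inner_apply, RCLike.inner_apply, conj_trivial]
      exact Finset.sum_congr rfl fun i _ => by ring
    rw [hBn, hCn, hBC]
    have expand : ∀ i j : Fin D, (B j * C i - C j * B i) * (B j * C i - C j * B i)
        = B j * B j * (C i * C i) + C j * C j * (B i * B i)
          - 2 * ((B j * C j) * (B i * C i)) := by intro i j; ring
    simp_rw [expand]
    rw [show (2:ℝ) * ((∑ i, B i * B i) * (∑ i, C i * C i) - (∑ i, B i * C i)^2)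
        = ((∑ i, B i * B i) * (∑ i, C i * C i) + (∑ i, C i * C i) * (∑ i, B i * B i))
          - 2 * ((∑ i, B i * C i) * (∑ i, B i * C i)) from by ring]
    rw [Finset.sum_mul_sum, Finset.sum_mul_sum, Finset.sum_mul_sum]
    rw [neg_inj]
    have hmerge : ∀ (F G H : Fin D → Fin D → ℝ),
        ((∑ i, ∑ j, F i j) + ∑ i, ∑ j, G i j) - 2 * ∑ i, ∑ j, H i j
        = ∑ i, ∑ j, (F i j + G i j - 2 * H i j) := by
      intro F G H
      rw [Finset.mul_sum, ← Finset.sum_add_distrib, ← Finset.sum_sub_distrib]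
      refine Finset.sum_congr rfl fun i _ => ?_
      rw [Finset.mul_sum, ← Finset.sum_add_distrib, ← Finset.sum_sub_distrib]
    rw [hmerge, Finset.sum_comm]
  -- finish
  rw [hsum, halg, smul_smul, smul_mul_assoc, one_mul, smul_smul, ← neg_smul, ← add_smul]
  convert zero_smul ℂ (U A) using 2
  rw [hc]
  have h1 : (Complex.I * ((g / (2 * hb * κ) : ℝ) : ℂ)) * (Complex.I * ((g / (2 * hb * κ) : ℝ) : ℂ))
      = -(((g / (2 * hb * κ))^2 : ℝ) : ℂ) := by
    push_cast
    rw [show ∀ x : ℂ, (Complex.I * x) * (Complex.I * x) = (Complex.I * Complex.I) * (x * x) from by intros; ring]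
    rw [Complex.I_mul_I]; ring
  rw [h1]
  push_cast
  have hhb' : (hb : ℂ) ≠ 0 := by exact_mod_cast hhb.ne'
  have hκ' : (κ : ℂ) ≠ 0 := by exact_mod_cast hκ.ne'
  field_simp
  ring
end

section
/- Let ħ, κ, g > 0, let μ ∈ ℝ, and let u : ℝ → ℝ satisfy the Airy equation u''(x) = x·u(x) for all x ∈ ℝ. Set γ := (3g/(2ħκ))^{1/3} and δ := μ·(32/(9g²ħ⁴κ))^{1/3}, and define f(r) := u(γ·r − δ)/r for r > 0. Then for every r > 0, −(ħ²κ/2)·(f''(r) + (2/r)·f'(r)) + (3għ/4)·r·f(r) = μ·f(r). -/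
/-- if u solves the Airy equation u'' = x·u, then
f(r) := u(γ·r − δ)/r with γ = (3g/(2ħκ))^{1/3} and δ = μ·(32/(9g²ħ⁴κ))^{1/3}
satisfies the D = 3 radial equation
−(ħ²κ/2)·(f'' + (2/r)·f') + (3għ/4)·r·f = μ·f for all r > 0. -/
theorem airy_solves_radial_D3_eigenvalue_problem
    (hb κ g : ℝ) (hhb : 0 < hb) (hκ : 0 < κ) (hg : 0 < g)
    (μ : ℝ) (u : ℝ → ℝ)
    (hu : Differentiable ℝ u) (hu' : Differentiable ℝ (deriv u))
    (hAiry : ∀ x, deriv (deriv u) x = x * u x)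
    (γ δ : ℝ)
    (hγ : γ = (3 * g / (2 * hb * κ)) ^ ((1 : ℝ) / 3))
    (hδ : δ = μ * (32 / (9 * g ^ 2 * hb ^ 4 * κ)) ^ ((1 : ℝ) / 3))
    (f : ℝ → ℝ) (hf : ∀ r, f r = u (γ * r - δ) / r) :
    ∀ r : ℝ, 0 < r →
      -(hb ^ 2 * κ / 2) * (deriv (deriv f) r + (2 / r) * deriv f r)
        + (3 * g * hb / 4) * r * f r
      = μ * f r := by
  -- algebraic identities
  have hx : (0:ℝ) < 3 * g / (2 * hb * κ) := by positivity
  have hy : (0:ℝ) < 32 / (9 * g ^ 2 * hb ^ 4 * κ) := by positivity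
  have hA : γ ^ 3 = 3 * g / (2 * hb * κ) := by
    rw [hγ, ← Real.rpow_natCast (_ ^ ((1:ℝ)/3)) 3, ← Real.rpow_mul hx.le]
    norm_num
  have hδ3 : δ ^ 3 = μ ^ 3 * (32 / (9 * g ^ 2 * hb ^ 4 * κ)) := by
    rw [hδ, mul_pow, ← Real.rpow_natCast (_ ^ ((1:ℝ)/3)) 3, ← Real.rpow_mul hy.le]
    norm_num
  have hB : γ ^ 2 * δ = 2 * μ / (hb ^ 2 * κ) := by
    have h3 : Odd 3 := ⟨1, by norm_num⟩
    apply (h3.strictMono_pow (R := ℝ)).injective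
    show (γ ^ 2 * δ) ^ 3 = (2 * μ / (hb ^ 2 * κ)) ^ 3
    have : (γ ^ 2 * δ) ^ 3 = (γ ^ 3) ^ 2 * δ ^ 3 := by ring
    rw [this, hA, hδ3]
    field_simp
    ring
  intro r hr
  have hrne : r ≠ 0 := hr.ne'
  -- rewrite f in mul-inv form
  have hfe : f = fun r => u (γ * r - δ) * r⁻¹ := by
    funext r; rw [hf r, div_eq_mul_inv]
  -- inner function derivative
  have hw : ∀ s : ℝ, HasDerivAt (fun t => γ * t - δ) γ s := fun s => by
    simpa using ((hasDerivAt_id s).const_mul γ).sub_const δ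
  have hU : ∀ s : ℝ, HasDerivAt (fun t => u (γ * t - δ)) (deriv u (γ * s - δ) * γ) s :=
    fun s => ((hu (γ * s - δ)).hasDerivAt).comp s (hw s)
  have hU' : ∀ s : ℝ, HasDerivAt (fun t => deriv u (γ * t - δ))
      (deriv (deriv u) (γ * s - δ) * γ) s :=
    fun s => by have := ((hu' (γ * s - δ)).hasDerivAt).comp s (hw s); exact this
  -- first derivative of f
  set D1 : ℝ → ℝ := fun s => deriv u (γ * s - δ) * γ * s⁻¹ + u (γ * s - δ) * (-(s ^ 2)⁻¹)
    with hD1def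
  have hD1 : ∀ s : ℝ, s ≠ 0 → HasDerivAt f (D1 s) s := by
    intro s hs
    rw [hfe]
    simpa [hD1def, pow_two, Pi.mul_def] using (hU s).mul (hasDerivAt_inv hs)
  have hderivf : ∀ s : ℝ, s ≠ 0 → deriv f s = D1 s := fun s hs => (hD1 s hs).deriv
  -- second derivative
  have hD1' : HasDerivAt D1
      (deriv (deriv u) (γ * r - δ) * γ * γ * r⁻¹ + deriv u (γ * r - δ) * γ * (-(r ^ 2)⁻¹)
        + (deriv u (γ * r - δ) * γ * (-(r ^ 2)⁻¹)
          + u (γ * r - δ) * (-(-(2 * r ^ 1) / (r ^ 2) ^ 2)))) r := by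
    have h1 : HasDerivAt (fun s => deriv u (γ * s - δ) * γ * s⁻¹)
        (deriv (deriv u) (γ * r - δ) * γ * γ * r⁻¹
          + deriv u (γ * r - δ) * γ * (-(r ^ 2)⁻¹)) r := by
      simpa [pow_two, mul_comm, mul_assoc, mul_left_comm, Pi.mul_def] using
        ((hU' r).mul_const γ).mul (hasDerivAt_inv hrne)
    have h2 : HasDerivAt (fun s => u (γ * s - δ) * (-(s ^ 2)⁻¹))
        (deriv u (γ * r - δ) * γ * (-(r ^ 2)⁻¹)
          + u (γ * r - δ) * (-(-(2 * r ^ 1) / (r ^ 2) ^ 2))) r := by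
      have hp : HasDerivAt (fun s : ℝ => -((s ^ 2)⁻¹)) (-(-(2 * r ^ 1) / (r ^ 2) ^ 2)) r :=
        (((hasDerivAt_pow 2 r).inv (pow_ne_zero 2 hrne))).neg
      have := (hU r).mul hp
      convert this using 1
      all_goals rfl
    simpa [hD1def, Pi.add_def] using h1.add h2
  have hderiv2 : deriv (deriv f) r
      = deriv (deriv u) (γ * r - δ) * γ * γ * r⁻¹ + deriv u (γ * r - δ) * γ * (-(r ^ 2)⁻¹)
        + (deriv u (γ * r - δ) * γ * (-(r ^ 2)⁻¹)
          + u (γ * r - δ) * (-(-(2 * r ^ 1) / (r ^ 2) ^ 2))) := by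
    have heq : deriv f =ᶠ[nhds r] D1 := by
      filter_upwards [eventually_ne_nhds hrne] with s hs using hderivf s hs
    rw [Filter.EventuallyEq.deriv_eq heq]
    exact hD1'.deriv
  have key : hb ^ 2 * κ / 2 * γ ^ 3 = 3 * g * hb / 4 := by
    rw [hA]; field_simp; ring
  have hB' : hb ^ 2 * κ * (γ ^ 2 * δ) = 2 * μ := by
    rw [hB]; field_simp
  have lhs_eq : deriv (deriv f) r + (2 / r) * deriv f r
      = γ ^ 2 * (γ * r - δ) * u (γ * r - δ) / r := by
    rw [hderiv2, hderivf r hrne, hD1def, hAiry (γ * r - δ)]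
    field_simp
    ring
  rw [lhs_eq, hf r]
  field_simp
  linear_combination (-8 * u (γ * r - δ) * r) * key + (4 * u (γ * r - δ)) * hB'
end
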